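/- Suppose (φ, A) is a C² solution on an interval of the static system (1+r²)A φ'' + (r(1+r²)A φ'² + (1+r²)A' + ((2+4r²)/r)A)φ' + 2φ = 0 and (1+r²)A' − ((1+3r²)/r)(1−A) − 2rφ² + r(1+r²)A φ'² = 0 with r > 0. Define B(r) = (A(r)−1)(1+r²). If B'(r₀) = 0 at some r₀ > 0, then B''(r₀) = 2φ'(r₀)² + 4r₀²φ(r₀)²φ'(r₀)² + 4(r₀φ'(r₀)+φ(r₀))², and in particular B''(r₀) ≥ 0. -/

import Mathlib

open Real

/-- If (φ, A) is a C² solution of the static system on an interval of positive radii,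
and B(r) = (A(r)−1)(1+r²) has B'(r₀) = 0 at some r₀ in the interval, then
B''(r₀) = 2φ'² + 4r²φ²φ'² + 4(rφ'+φ)² at r₀, which is nonnegative. -/
theorem stmt_9 (a c : ℝ) (φ A : ℝ → ℝ)
    (ha : 0 ≤ a)
    (hφ : ContDiffOn ℝ 2 φ (Set.Ioo a c)) (hA : ContDiffOn ℝ 2 A (Set.Ioo a c))
    (heqφ : ∀ r ∈ Set.Ioo a c,
      (1 + r ^ 2) * A r * deriv (deriv φ) r
        + (r * (1 + r ^ 2) * A r * (deriv φ r) ^ 2 + (1 + r ^ 2) * deriv A r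
            + ((2 + 4 * r ^ 2) / r) * A r) * deriv φ r + 2 * φ r = 0)
    (heqA : ∀ r ∈ Set.Ioo a c,
      (1 + r ^ 2) * deriv A r - ((1 + 3 * r ^ 2) / r) * (1 - A r)
        - 2 * r * (φ r) ^ 2 + r * (1 + r ^ 2) * A r * (deriv φ r) ^ 2 = 0)
    (B : ℝ → ℝ) (hB : ∀ r, B r = (A r - 1) * (1 + r ^ 2))
    (r₀ : ℝ) (hr₀ : r₀ ∈ Set.Ioo a c) (hr₀pos : 0 < r₀)
    (hcrit : deriv B r₀ = 0) :
    deriv (deriv B) r₀ =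
        2 * (deriv φ r₀) ^ 2 + 4 * r₀ ^ 2 * (φ r₀) ^ 2 * (deriv φ r₀) ^ 2
          + 4 * (r₀ * deriv φ r₀ + φ r₀) ^ 2 ∧
      0 ≤ deriv (deriv B) r₀ := by
  obtain ⟨har, hrc⟩ := hr₀
  have hmem : ∀ r, r ∈ Set.Ioo a c → Set.Ioo a c ∈ nhds r := fun r hr =>
    isOpen_Ioo.mem_nhds hr
  have hnb : Set.Ioo a c ∈ nhds r₀ := hmem r₀ ⟨har, hrc⟩
  have hr0 : r₀ ≠ 0 := ne_of_gt hr₀pos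
  -- differentiability facts
  have hAd : ∀ r ∈ Set.Ioo a c, DifferentiableAt ℝ A r := fun r hr =>
    ((hA r hr).differentiableWithinAt (by norm_num)).differentiableAt (hmem r hr)
  have hφd : ∀ r ∈ Set.Ioo a c, DifferentiableAt ℝ φ r := fun r hr =>
    ((hφ r hr).differentiableWithinAt (by norm_num)).differentiableAt (hmem r hr)
  have hA'cd : ContDiffOn ℝ 1 (deriv A) (Set.Ioo a c) :=
    hA.deriv_of_isOpen isOpen_Ioo (by norm_num)
  have hφ'cd : ContDiffOn ℝ 1 (deriv φ) (Set.Ioo a c) :=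
    hφ.deriv_of_isOpen isOpen_Ioo (by norm_num)
  have hA'd : DifferentiableAt ℝ (deriv A) r₀ :=
    ((hA'cd r₀ ⟨har, hrc⟩).differentiableWithinAt (by norm_num)).differentiableAt hnb
  have hφ'd : DifferentiableAt ℝ (deriv φ) r₀ :=
    ((hφ'cd r₀ ⟨har, hrc⟩).differentiableWithinAt (by norm_num)).differentiableAt hnb
  -- first derivative of B
  have hderivB : ∀ r ∈ Set.Ioo a c,
      HasDerivAt B (deriv A r * (1 + r ^ 2) + (A r - 1) * (2 * r)) r := by
    intro r hr
    have h1 : HasDerivAt (fun x => A x - 1) (deriv A r) r :=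
      ((hAd r hr).hasDerivAt).sub_const 1
    have h2 : HasDerivAt (fun x : ℝ => 1 + x ^ 2) (2 * r) r := by
      simpa using ((hasDerivAt_pow 2 r).const_add 1)
    have h3 := h1.mul h2
    have hBf : B = fun x => (A x - 1) * (1 + x ^ 2) := funext hB
    rw [hBf]
    exact h3
  have hB'ev : deriv B =ᶠ[nhds r₀]
      (fun r => deriv A r * (1 + r ^ 2) + (A r - 1) * (2 * r)) := by
    filter_upwards [hnb] with r hr
    exact (hderivB r hr).deriv
  -- e4 : critical point equation
  have e4 : deriv A r₀ * (1 + r₀ ^ 2) + (A r₀ - 1) * (2 * r₀) = 0 := by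
    rw [← (hderivB r₀ ⟨har, hrc⟩).deriv]; exact hcrit
  -- second derivative of B
  have hB'' : deriv (deriv B) r₀ =
      deriv (deriv A) r₀ * (1 + r₀ ^ 2) + deriv A r₀ * (2 * r₀)
        + (deriv A r₀ * (2 * r₀) + (A r₀ - 1) * 2) := by
    rw [hB'ev.deriv_eq]
    have h1 : HasDerivAt (fun r : ℝ => deriv A r * (1 + r ^ 2))
        (deriv (deriv A) r₀ * (1 + r₀ ^ 2) + deriv A r₀ * (2 * r₀)) r₀ := by
      exact (hA'd.hasDerivAt).mul
        (by simpa using ((hasDerivAt_pow 2 r₀).const_add 1) :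
          HasDerivAt (fun x : ℝ => 1 + x ^ 2) (2 * r₀) r₀)
    have h2 : HasDerivAt (fun r : ℝ => (A r - 1) * (2 * r))
        (deriv A r₀ * (2 * r₀) + (A r₀ - 1) * 2) r₀ := by
      have hlin : HasDerivAt (fun x : ℝ => 2 * x) 2 r₀ := by
        simpa using (hasDerivAt_id r₀).const_mul (2:ℝ)
      exact (((hAd r₀ ⟨har, hrc⟩).hasDerivAt).sub_const 1).mul hlin
    exact (h1.add h2).deriv
  -- e1, e2 at r₀
  have e1 := heqA r₀ ⟨har, hrc⟩
  have e2 := heqφ r₀ ⟨har, hrc⟩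
  -- e3 : derivative of constraint equation
  set F : ℝ → ℝ := fun r =>
    (1 + r ^ 2) * deriv A r - ((1 + 3 * r ^ 2) / r) * (1 - A r)
      - 2 * r * (φ r) ^ 2 + r * (1 + r ^ 2) * A r * (deriv φ r) ^ 2 with hFdef
  have hFev : F =ᶠ[nhds r₀] (fun _ => (0 : ℝ)) := by
    filter_upwards [hnb] with r hr
    exact heqA r hr
  have hF0 : deriv F r₀ = 0 := by
    rw [hFev.deriv_eq]; simp
  have hFd : HasDerivAt F
      ((2 * r₀) * deriv A r₀ + (1 + r₀ ^ 2) * deriv (deriv A) r₀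
        - (((6 * r₀) * r₀ - (1 + 3 * r₀ ^ 2) * 1) / r₀ ^ 2 * (1 - A r₀)
            + ((1 + 3 * r₀ ^ 2) / r₀) * (-(deriv A r₀)))
        - (2 * (φ r₀) ^ 2 + (2 * r₀) * (2 * φ r₀ * deriv φ r₀))
        + (((1 * (1 + r₀ ^ 2) + r₀ * (2 * r₀)) * A r₀
              + r₀ * (1 + r₀ ^ 2) * deriv A r₀) * (deriv φ r₀) ^ 2
            + r₀ * (1 + r₀ ^ 2) * A r₀
              * (2 * deriv φ r₀ * deriv (deriv φ) r₀))) r₀ := by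
    have hpow : HasDerivAt (fun x : ℝ => 1 + x ^ 2) (2 * r₀) r₀ := by
      simpa using ((hasDerivAt_pow 2 r₀).const_add 1)
    have hAh : HasDerivAt A (deriv A r₀) r₀ := (hAd r₀ ⟨har, hrc⟩).hasDerivAt
    have hφh : HasDerivAt φ (deriv φ r₀) r₀ := (hφd r₀ ⟨har, hrc⟩).hasDerivAt
    have hA'h : HasDerivAt (deriv A) (deriv (deriv A) r₀) r₀ := hA'd.hasDerivAt
    have hφ'h : HasDerivAt (deriv φ) (deriv (deriv φ) r₀) r₀ := hφ'd.hasDerivAt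
    have t1 : HasDerivAt (fun r : ℝ => (1 + r ^ 2) * deriv A r)
        ((2 * r₀) * deriv A r₀ + (1 + r₀ ^ 2) * deriv (deriv A) r₀) r₀ :=
      hpow.mul hA'h
    have tq : HasDerivAt (fun r : ℝ => (1 + 3 * r ^ 2) / r)
        (((6 * r₀) * r₀ - (1 + 3 * r₀ ^ 2) * 1) / r₀ ^ 2) r₀ := by
      have hn : HasDerivAt (fun x : ℝ => 1 + 3 * x ^ 2) (6 * r₀) r₀ := by
        have := ((hasDerivAt_pow 2 r₀).const_mul 3).const_add 1
        simpa using this.congr_deriv (by ring)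
      exact hn.div (hasDerivAt_id r₀) hr0
    have t2 : HasDerivAt (fun r : ℝ => ((1 + 3 * r ^ 2) / r) * (1 - A r))
        (((6 * r₀) * r₀ - (1 + 3 * r₀ ^ 2) * 1) / r₀ ^ 2 * (1 - A r₀)
          + ((1 + 3 * r₀ ^ 2) / r₀) * (-(deriv A r₀))) r₀ :=
      tq.mul (hAh.const_sub 1)
    have t3 : HasDerivAt (fun r : ℝ => 2 * r * (φ r) ^ 2)
        (2 * (φ r₀) ^ 2 + (2 * r₀) * (2 * φ r₀ * deriv φ r₀)) r₀ := by
      have hp : HasDerivAt (fun r : ℝ => (φ r) ^ 2) (2 * φ r₀ * deriv φ r₀) r₀ := by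
        simpa using hφh.fun_pow 2
      have hlin : HasDerivAt (fun x : ℝ => 2 * x) 2 r₀ := by
        simpa using (hasDerivAt_id r₀).const_mul (2:ℝ)
      exact hlin.mul hp
    have t4 : HasDerivAt (fun r : ℝ => r * (1 + r ^ 2) * A r * (deriv φ r) ^ 2)
        (((1 * (1 + r₀ ^ 2) + r₀ * (2 * r₀)) * A r₀
            + r₀ * (1 + r₀ ^ 2) * deriv A r₀) * (deriv φ r₀) ^ 2
          + r₀ * (1 + r₀ ^ 2) * A r₀ * (2 * deriv φ r₀ * deriv (deriv φ) r₀)) r₀ := by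
      have hr1 : HasDerivAt (fun r : ℝ => r * (1 + r ^ 2))
          (1 * (1 + r₀ ^ 2) + r₀ * (2 * r₀)) r₀ := by
        have hid : HasDerivAt (fun x : ℝ => x) 1 r₀ := hasDerivAt_id r₀
        exact hid.mul hpow
      have hr2 := hr1.mul hAh
      have hp' : HasDerivAt (fun r : ℝ => (deriv φ r) ^ 2)
          (2 * deriv φ r₀ * deriv (deriv φ) r₀) r₀ := by
        simpa using hφ'h.fun_pow 2
      exact hr2.mul hp'
    exact ((t1.sub t2).sub t3).add t4
  have e3 := hFd.deriv.symm.trans hF0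
  -- final algebra
  have key : deriv (deriv A) r₀ * (1 + r₀ ^ 2) + deriv A r₀ * (2 * r₀)
        + (deriv A r₀ * (2 * r₀) + (A r₀ - 1) * 2) =
      2 * (deriv φ r₀) ^ 2 + 4 * r₀ ^ 2 * (φ r₀) ^ 2 * (deriv φ r₀) ^ 2
          + 4 * (r₀ * deriv φ r₀ + φ r₀) ^ 2 := by
    field_simp at e1 e2 e3
    have key3 : r₀ ^ 3 * ((deriv (deriv A) r₀ * (1 + r₀ ^ 2) + deriv A r₀ * (2 * r₀)
          + (deriv A r₀ * (2 * r₀) + (A r₀ - 1) * 2))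
        - (2 * (deriv φ r₀) ^ 2 + 4 * r₀ ^ 2 * (φ r₀) ^ 2 * (deriv φ r₀) ^ 2
          + 4 * (r₀ * deriv φ r₀ + φ r₀) ^ 2)) = 0 := by
      linear_combination (r₀ + 2 * r₀ ^ 3 * (deriv φ r₀) ^ 2) * e1
        + (-2 * r₀ ^ 3 * deriv φ r₀) * e2 + r₀ * e3
        + (-2 * r₀ ^ 2 - r₀ ^ 4 * (deriv φ r₀) ^ 2) * e4
    have h3 : r₀ ^ 3 ≠ 0 := pow_ne_zero _ hr0
    have := (mul_eq_zero.mp key3).resolve_left h3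
    linarith
  rw [hB'']
  exact ⟨key, key ▸ by positivity⟩
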